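/- arXiv:2301.10526 — 4 statements merged into one kernel-verified Lean document; each statement's English description precedes it below -/
import Mathlib

section
/- Under pairwise orthogonal channels, the DPC sum-rate under any power allocation {p_k} with ∑ p_k ≤ P_max is upper bounded by ∑_k log2(1 + p_k ||h_k||^2/σ^2), and this bound is achieved by zero-forcing; hence the ZF sum-rate equals the DPC sum-rate. -/
open Matrix ComplexOrder

namespace Stmt4Aux

variable {M K : ℕ}

lemma dp_sum_mulVec (S : Fin K → Matrix (Fin M) (Fin M) ℂ) (s : Finset (Fin K))
    (v : Fin M → ℂ) :
    star v ⬝ᵥ (∑ i ∈ s, S i).mulVec v = ∑ i ∈ s, star v ⬝ᵥ (S i).mulVec v := by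
  classical
  induction s using Finset.induction_on with
  | empty => simp
  | insert _ _ hn ih =>
      rw [Finset.sum_insert hn, Matrix.add_mulVec, dotProduct_add, ih, Finset.sum_insert hn]

lemma quad_re_nonneg {S : Matrix (Fin M) (Fin M) ℂ} (hS : S.PosSemidef) (v : Fin M → ℂ) :
    0 ≤ (star v ⬝ᵥ S.mulVec v).re := by
  simpa using (Complex.le_def.mp (hS.dotProduct_mulVec_nonneg v)).1

lemma dp_self_re (u : Fin M → ℂ) : (star u ⬝ᵥ u).re = ∑ i, Complex.normSq (u i) := by
  rw [dotProduct, Complex.re_sum]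
  exact Finset.sum_congr rfl fun i _ => by
    simp [Complex.mul_re, Complex.normSq_apply]

lemma dp_self_im (u : Fin M → ℂ) : (star u ⬝ᵥ u).im = 0 := by
  rw [dotProduct, Complex.im_sum]
  exact Finset.sum_eq_zero fun i _ => by simp [Complex.mul_im]; ring

lemma dp_self_pos {u : Fin M → ℂ} (hu : u ≠ 0) : 0 < (star u ⬝ᵥ u).re := by
  have := Matrix.dotProduct_star_self_pos_iff.mpr hu
  exact (Complex.lt_def.mp this).1

open scoped MatrixOrder Matrix.Norms.L2Operator in
lemma psd_eq_ctm {S : Matrix (Fin M) (Fin M) ℂ} (hS : S.PosSemidef) : ∃ B : Matrix (Fin M) (Fin M) ℂ, S = Bᴴ * B := by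
  obtain ⟨B, hB⟩ := CStarAlgebra.nonneg_iff_eq_star_mul_self.mp hS.nonneg
  exact ⟨B, hB⟩

lemma trace_re_nonneg {S : Matrix (Fin M) (Fin M) ℂ} (hS : S.PosSemidef) : 0 ≤ S.trace.re := by
  obtain ⟨B, rfl⟩ := psd_eq_ctm hS
  rw [Matrix.trace, Complex.re_sum]
  refine Finset.sum_nonneg fun i _ => ?_
  rw [Matrix.diag_apply, Matrix.mul_apply, Complex.re_sum]
  refine Finset.sum_nonneg fun j _ => ?_
  simp [Matrix.conjTranspose_apply, Complex.mul_re]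
  nlinarith [sq_nonneg (B j i).re, sq_nonneg (B j i).im]

lemma quad_re_le {S : Matrix (Fin M) (Fin M) ℂ} (hS : S.PosSemidef) (v : Fin M → ℂ) :
    (star v ⬝ᵥ S.mulVec v).re ≤ S.trace.re * (star v ⬝ᵥ v).re := by
  obtain ⟨B, rfl⟩ := psd_eq_ctm hS
  rw [← Matrix.mulVec_mulVec, Matrix.dotProduct_mulVec, ← Matrix.star_mulVec]
  rw [dp_self_re, dp_self_re]
  have htr : (Bᴴ * B).trace.re = ∑ i, ∑ j, Complex.normSq (B i j) := by
    rw [Matrix.trace, Complex.re_sum]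
    rw [Finset.sum_comm]
    refine Finset.sum_congr rfl fun i _ => ?_
    rw [Matrix.diag_apply, Matrix.mul_apply, Complex.re_sum]
    refine Finset.sum_congr rfl fun j _ => by
      simp [Matrix.conjTranspose_apply, Complex.mul_re, Complex.normSq_apply]
  rw [htr, Finset.sum_mul]
  refine Finset.sum_le_sum fun i _ => ?_
  have h1 : ‖B.mulVec v i‖ ≤ ∑ j, ‖B i j‖ * ‖v j‖ := by
    rw [Matrix.mulVec, dotProduct]
    refine (norm_sum_le _ _).trans_eq ?_
    exact Finset.sum_congr rfl fun j _ => norm_mul _ _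
  have h2 : Complex.normSq (B.mulVec v i) ≤ (∑ j, ‖B i j‖ * ‖v j‖) ^ 2 := by
    rw [← Complex.sq_norm]
    exact pow_le_pow_left₀ (norm_nonneg _) h1 2
  refine h2.trans ?_
  refine (Finset.sum_mul_sq_le_sq_mul_sq _ _ _).trans_eq ?_
  congr 1
  · exact Finset.sum_congr rfl fun j _ => Complex.sq_norm _
  · exact Finset.sum_congr rfl fun j _ => Complex.sq_norm _

lemma outer_quad (w x : Fin M → ℂ) :
    star x ⬝ᵥ (vecMulVec w (star w)).mulVec x = (star x ⬝ᵥ w) * (star w ⬝ᵥ x) := by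
  trans ∑ i, ∑ j, (star (x i) * w i) * (star (w j) * x j)
  · simp only [Matrix.mulVec, dotProduct, Matrix.vecMulVec_apply, Pi.star_apply, Finset.mul_sum]
    exact Finset.sum_congr rfl fun i _ => Finset.sum_congr rfl fun j _ => by ring
  · rw [← Finset.sum_mul_sum]
    rfl

lemma outer_psd (w : Fin M → ℂ) : (vecMulVec w (star w)).PosSemidef := by
  rw [posSemidef_iff_dotProduct_mulVec]
  constructor
  · ext i j
    simp [Matrix.conjTranspose_apply, Matrix.vecMulVec_apply, mul_comm]
  · intro x
    have e : star (star w ⬝ᵥ x) * (star w ⬝ᵥ x)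
        = ((Complex.normSq (star w ⬝ᵥ x) : ℝ) : ℂ) := by
      rw [Complex.star_def, mul_comm, Complex.mul_conj]
    rw [outer_quad, star_dotProduct (v := x) (w := w), e]
    exact Complex.zero_le_real.mpr (Complex.normSq_nonneg _)

lemma outer_trace (w : Fin M → ℂ) : (vecMulVec w (star w)).trace = star w ⬝ᵥ w := by
  simp [Matrix.trace, Matrix.diag, Matrix.vecMulVec_apply, dotProduct, mul_comm]

lemma smul_self_re (v : Fin M → ℂ) (c : ℝ) :
    (star ((c:ℂ) • v) ⬝ᵥ ((c:ℂ) • v)).re = (c * c) * (star v ⬝ᵥ v).re := by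
  rw [star_smul, smul_dotProduct, dotProduct_smul, smul_eq_mul, smul_eq_mul, ← mul_assoc]
  simp [Complex.conj_ofReal, ← Complex.ofReal_mul, Complex.re_ofReal_mul]

lemma smul_normSq (v u : Fin M → ℂ) (c : ℝ) :
    Complex.normSq (star v ⬝ᵥ ((c:ℂ) • u)) = c * c * Complex.normSq (star v ⬝ᵥ u) := by
  rw [dotProduct_smul, smul_eq_mul, Complex.normSq_mul, Complex.normSq_ofReal]

end Stmt4Aux

open Stmt4Aux

open Matrix ComplexOrder in
theorem stmt_4 (K M : ℕ) (h : Fin K → Fin M → ℂ)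
    (hne : ∀ k, h k ≠ 0)
    (horth : ∀ k m, k ≠ m → star (h k) ⬝ᵥ h m = 0)
    (σ2 P : ℝ) (hσ : 0 < σ2) (hP : 0 ≤ P) :
    (∀ S : Fin K → Matrix (Fin M) (Fin M) ℂ, (∀ k, (S k).PosSemidef) →
      (∑ k, ((S k).trace).re ≤ P) →
      (∑ k, Real.logb 2 ((σ2 + (star (h k) ⬝ᵥ (∑ i ∈ Finset.Ici k, S i).mulVec (h k)).re) /
            (σ2 + (star (h k) ⬝ᵥ (∑ i ∈ Finset.Ioi k, S i).mulVec (h k)).re))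
        ≤ ∑ k, Real.logb 2 (1 + ((S k).trace).re * (star (h k) ⬝ᵥ h k).re / σ2)) ∧
      ∃ w : Fin K → Fin M → ℂ,
        (∀ k m, m ≠ k → star (h m) ⬝ᵥ w k = 0) ∧
        (∑ k, (star (w k) ⬝ᵥ w k).re) ≤ P ∧
        ∀ k, Real.logb 2 (1 + ‖star (h k) ⬝ᵥ w k‖ ^ 2 / σ2)
          = Real.logb 2 (1 + ((S k).trace).re * (star (h k) ⬝ᵥ h k).re / σ2)) ∧
    (∀ w : Fin K → Fin M → ℂ, (∀ k m, m ≠ k → star (h m) ⬝ᵥ w k = 0) →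
      (∑ k, (star (w k) ⬝ᵥ w k).re) ≤ P →
      ∃ S : Fin K → Matrix (Fin M) (Fin M) ℂ, (∀ k, (S k).PosSemidef) ∧
        (∑ k, ((S k).trace).re ≤ P) ∧
        ∑ k, Real.logb 2 (1 + ‖star (h k) ⬝ᵥ w k‖ ^ 2 / σ2) ≤
        ∑ k, Real.logb 2 ((σ2 + (star (h k) ⬝ᵥ (∑ i ∈ Finset.Ici k, S i).mulVec (h k)).re) /
            (σ2 + (star (h k) ⬝ᵥ (∑ i ∈ Finset.Ioi k, S i).mulVec (h k)).re))) := by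
  constructor
  · intro S hS hPow
    constructor
    · -- DPC sum ≤ bound
      refine Finset.sum_le_sum fun k _ => ?_
      have hn : 0 < (star (h k) ⬝ᵥ h k).re := dp_self_pos (hne k)
      have hT : 0 ≤ ((S k).trace).re := trace_re_nonneg (hS k)
      set n := (star (h k) ⬝ᵥ h k).re
      set T := ((S k).trace).re
      set b := (star (h k) ⬝ᵥ (∑ i ∈ Finset.Ioi k, S i).mulVec (h k)).re with hb_def
      have hb : 0 ≤ b := by
        rw [hb_def, dp_sum_mulVec, Complex.re_sum]
        exact Finset.sum_nonneg fun i _ => quad_re_nonneg (hS i) _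
      have hx : 0 ≤ (star (h k) ⬝ᵥ (S k).mulVec (h k)).re := quad_re_nonneg (hS k) _
      have hxT : (star (h k) ⬝ᵥ (S k).mulVec (h k)).re ≤ T * n := quad_re_le (hS k) _
      set x := (star (h k) ⬝ᵥ (S k).mulVec (h k)).re
      have hIci : (star (h k) ⬝ᵥ (∑ i ∈ Finset.Ici k, S i).mulVec (h k)).re = x + b := by
        rw [← Finset.Ioi_insert, Finset.sum_insert (by simp), Matrix.add_mulVec,
          dotProduct_add, Complex.add_re]
      rw [hIci]
      have hab : (0:ℝ) < σ2 + b := by linarith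
      have key : (σ2 + (x + b)) / (σ2 + b) ≤ 1 + T * n / σ2 := by
        have e : 1 + T * n / σ2 = (σ2 + T * n) / σ2 := by field_simp
        rw [e, div_le_div_iff₀ hab hσ]
        nlinarith [mul_le_mul_of_nonneg_right hxT hσ.le,
          mul_nonneg (mul_nonneg hT hn.le) hb]
      refine Real.logb_le_logb_of_le one_lt_two ?_ key
      exact div_pos (by linarith) hab
    · -- ZF achieves
      refine ⟨fun k =>
          ((Real.sqrt (((S k).trace).re / (star (h k) ⬝ᵥ h k).re) : ℝ) : ℂ) • h k, ?_, ?_, ?_⟩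
      · intro k m hmk
        rw [dotProduct_smul, horth m k hmk, smul_zero]
      · have key : ∀ k : Fin K,
            (star ((((Real.sqrt (((S k).trace).re / (star (h k) ⬝ᵥ h k).re)) : ℝ) : ℂ) • h k)
              ⬝ᵥ ((((Real.sqrt (((S k).trace).re / (star (h k) ⬝ᵥ h k).re)) : ℝ) : ℂ) • h k)).re
            = ((S k).trace).re := by
          intro k
          have hn : 0 < (star (h k) ⬝ᵥ h k).re := dp_self_pos (hne k)
          have hT : 0 ≤ ((S k).trace).re := trace_re_nonneg (hS k)
          rw [smul_self_re, Real.mul_self_sqrt (div_nonneg hT hn.le),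
            div_mul_cancel₀ _ hn.ne']
        rw [Finset.sum_congr rfl fun k _ => key k]
        exact hPow
      · intro k
        have hn : 0 < (star (h k) ⬝ᵥ h k).re := dp_self_pos (hne k)
        have hT : 0 ≤ ((S k).trace).re := trace_re_nonneg (hS k)
        have habs : ‖star (h k) ⬝ᵥ
            ((((Real.sqrt (((S k).trace).re / (star (h k) ⬝ᵥ h k).re)) : ℝ) : ℂ) • h k)‖ ^ 2
            = ((S k).trace).re * (star (h k) ⬝ᵥ h k).re := by
          rw [Complex.sq_norm, smul_normSq, Real.mul_self_sqrt (div_nonneg hT hn.le)]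
          have hzz : Complex.normSq (star (h k) ⬝ᵥ h k)
              = (star (h k) ⬝ᵥ h k).re * (star (h k) ⬝ᵥ h k).re := by
            rw [Complex.normSq_apply, dp_self_im]
            ring
          rw [hzz, div_mul_eq_mul_div, mul_comm ((star (h k) ⬝ᵥ h k).re),
            ← mul_assoc, mul_div_assoc, div_self hn.ne', mul_one]
        rw [habs]
  · -- Part 2
    intro w hZF hPow
    refine ⟨fun k => vecMulVec (w k) (star (w k)), fun k => outer_psd _, ?_, ?_⟩
    · have key : ∀ k : Fin K, ((vecMulVec (w k) (star (w k))).trace).re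
          = (star (w k) ⬝ᵥ w k).re := by
        intro k; rw [outer_trace]
      rw [Finset.sum_congr rfl fun k _ => key k]
      exact hPow
    · refine le_of_eq (Finset.sum_congr rfl fun k _ => ?_)
      classical
      have hterm : ∀ i : Fin K,
          (star (h k) ⬝ᵥ (vecMulVec (w i) (star (w i))).mulVec (h k)).re
          = if i = k then ‖star (h k) ⬝ᵥ w k‖ ^ 2 else 0 := by
        intro i
        by_cases hik : i = k
        · subst hik
          rw [outer_quad, star_dotProduct (v := w i) (w := h i), Complex.star_def,
            Complex.mul_conj]
          simp [Complex.normSq_eq_norm_sq, ← Complex.ofReal_pow]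
        · rw [outer_quad, hZF i k (Ne.symm hik)]
          simp [hik]
      have hIci : (star (h k) ⬝ᵥ (∑ i ∈ Finset.Ici k,
          vecMulVec (w i) (star (w i))).mulVec (h k)).re
          = ‖star (h k) ⬝ᵥ w k‖ ^ 2 := by
        rw [dp_sum_mulVec, Complex.re_sum, Finset.sum_congr rfl fun i _ => hterm i]
        simp
      have hIoi : (star (h k) ⬝ᵥ (∑ i ∈ Finset.Ioi k,
          vecMulVec (w i) (star (w i))).mulVec (h k)).re = 0 := by
        rw [dp_sum_mulVec, Complex.re_sum, Finset.sum_congr rfl fun i _ => hterm i]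
        simp
      rw [hIci, hIoi, add_zero, add_div, div_self hσ.ne']
end

section
/- Let Γ_1, Γ_2 > 0, P > 0, and define the Pareto curve of the two-user ZF rate region by R_1(p) = log2(1+Γ_1 p), R_2(p) = log2(1+Γ_2(P−p)) for p ∈ [0,P]. Then R_2 as a function of R_1 is strictly decreasing and strictly concave, i.e., the set {(r_1,r_2) : 0 ≤ r_1 ≤ R_1(p), 0 ≤ r_2 ≤ R_2(p), p ∈ [0,P]} parametrized by total power P is convex. -/
set_option maxHeartbeats 1000000 in
theorem stmt_7 (Γ1 Γ2 P : ℝ) (h1 : 0 < Γ1) (h2 : 0 < Γ2) (hP : 0 < P) :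
    StrictAntiOn (fun r : ℝ => Real.logb 2 (1 + Γ2 * (P - ((2:ℝ) ^ r - 1) / Γ1)))
      (Set.Icc 0 (Real.logb 2 (1 + Γ1 * P))) ∧
    StrictConcaveOn ℝ (Set.Icc 0 (Real.logb 2 (1 + Γ1 * P)))
      (fun r : ℝ => Real.logb 2 (1 + Γ2 * (P - ((2:ℝ) ^ r - 1) / Γ1))) ∧
    Convex ℝ {x : ℝ × ℝ | ∃ p ∈ Set.Icc (0:ℝ) P,
      0 ≤ x.1 ∧ x.1 ≤ Real.logb 2 (1 + Γ1 * p) ∧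
      0 ≤ x.2 ∧ x.2 ≤ Real.logb 2 (1 + Γ2 * (P - p))} := by
  have hb2 : (1:ℝ) < 2 := one_lt_two
  have htwo : (0:ℝ) < 2 := two_pos
  have hne1 : (2:ℝ) ≠ 1 := by norm_num
  set R : ℝ := Real.logb 2 (1 + Γ1 * P) with hR
  set f : ℝ → ℝ := fun r : ℝ => Real.logb 2 (1 + Γ2 * (P - ((2:ℝ) ^ r - 1) / Γ1)) with hf
  set B : ℝ := Γ2 / Γ1 with hBdef
  have hB : 0 < B := div_pos h2 h1
  set A : ℝ := 1 + Γ2 * P + B with hAdef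
  have hA : ∀ r : ℝ, 1 + Γ2 * (P - ((2:ℝ) ^ r - 1) / Γ1) = A - B * (2:ℝ)^r := by
    intro r
    rw [hAdef, hBdef]
    field_simp
    ring
  have hpos1P : (0:ℝ) < 1 + Γ1 * P := by nlinarith
  have h2R : (2:ℝ) ^ R = 1 + Γ1 * P := Real.rpow_logb htwo hne1 hpos1P
  -- 2^r ≤ 1 + Γ1 P for r ∈ Icc 0 R, and the argument is ≥ 1
  have hge1 : ∀ r ∈ Set.Icc (0:ℝ) R, 1 ≤ A - B * (2:ℝ)^r := by
    intro r hr
    have h2r : (2:ℝ)^r ≤ 1 + Γ1 * P := by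
      rw [← h2R]
      exact (Real.rpow_le_rpow_left_iff hb2).mpr hr.2
    have hBeq : B * (1 + Γ1 * P) = Γ2 / Γ1 + Γ2 * P := by
      rw [hBdef]; field_simp
    have := mul_le_mul_of_nonneg_left h2r hB.le
    rw [hAdef]; nlinarith
  have h1le : ∀ r ∈ Set.Icc (0:ℝ) R, 1 ≤ (2:ℝ)^r := by
    intro r hr
    have := (Real.rpow_le_rpow_left_iff hb2).mpr hr.1
    rwa [Real.rpow_zero] at this
  have hfA : f = fun r : ℝ => Real.logb 2 (A - B * (2:ℝ)^r) := by
    funext r; rw [hf]; simp only [hA]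
  -- strict antitonicity
  have hanti : StrictAntiOn f (Set.Icc 0 R) := by
    intro x hx y hy hxy
    rw [hfA]
    have hlt : (2:ℝ)^x < (2:ℝ)^y := (Real.rpow_lt_rpow_left_iff hb2).mpr hxy
    have harg : A - B * (2:ℝ)^y < A - B * (2:ℝ)^x := by
      nlinarith [mul_lt_mul_of_pos_left hlt hB]
    have hposy : (0:ℝ) < A - B * (2:ℝ)^y := lt_of_lt_of_le one_pos (hge1 y hy)
    exact Real.logb_lt_logb hb2 hposy harg
  -- strict concavity
  have hlog2 : (0:ℝ) < Real.log 2 := Real.log_pos hb2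
  have hconc : StrictConcaveOn ℝ (Set.Icc 0 R) f := by
    rw [hfA]
    refine ⟨convex_Icc _ _, fun x hx y hy hxy a b ha hbpos hab => ?_⟩
    have hbeq : b = 1 - a := by linarith
    subst hbeq
    simp only [smul_eq_mul]
    set z : ℝ := a * x + (1 - a) * y with hz
    -- 2^z < a 2^x + (1-a) 2^y via strict convexity of exp
    have hlogne : Real.log 2 ≠ 0 := hlog2.ne'
    have hxy' : Real.log 2 * x ≠ Real.log 2 * y := fun h => hxy (mul_left_cancel₀ hlogne h)
    have hexp := strictConvexOn_exp.2 (Set.mem_univ (Real.log 2 * x))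
      (Set.mem_univ (Real.log 2 * y)) hxy' ha hbpos hab
    simp only [smul_eq_mul] at hexp
    have h2z : (2:ℝ)^z < a * (2:ℝ)^x + (1 - a) * (2:ℝ)^y := by
      rw [Real.rpow_def_of_pos htwo, Real.rpow_def_of_pos htwo, Real.rpow_def_of_pos htwo]
      calc Real.exp (Real.log 2 * z)
          = Real.exp (a * (Real.log 2 * x) + (1 - a) * (Real.log 2 * y)) := by
            rw [hz]; ring_nf
        _ < a * Real.exp (Real.log 2 * x) + (1 - a) * Real.exp (Real.log 2 * y) := hexp
    set gx : ℝ := A - B * (2:ℝ)^x with hgx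
    set gy : ℝ := A - B * (2:ℝ)^y with hgy
    set gz : ℝ := A - B * (2:ℝ)^z with hgz
    have hgx1 : 1 ≤ gx := hge1 x hx
    have hgy1 : 1 ≤ gy := hge1 y hy
    have hmid : a * gx + (1 - a) * gy < gz := by
      rw [hgx, hgy, hgz]
      nlinarith [mul_lt_mul_of_pos_left h2z hB]
    have hmidpos : 0 < a * gx + (1 - a) * gy := by nlinarith
    have hgxpos : (0:ℝ) < gx := lt_of_lt_of_le one_pos hgx1
    have hgypos : (0:ℝ) < gy := lt_of_lt_of_le one_pos hgy1
    have hlogconc := strictConcaveOn_log_Ioi.concaveOn.2 (Set.mem_Ioi.mpr hgxpos)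
      (Set.mem_Ioi.mpr hgypos) ha.le hbpos.le hab
    simp only [smul_eq_mul] at hlogconc
    have hloglt : Real.log (a * gx + (1 - a) * gy) < Real.log gz :=
      Real.log_lt_log hmidpos hmid
    show a * Real.logb 2 gx + (1 - a) * Real.logb 2 gy < Real.logb 2 gz
    simp only [Real.logb]
    rw [show a * (Real.log gx / Real.log 2) + (1 - a) * (Real.log gy / Real.log 2)
        = (a * Real.log gx + (1 - a) * Real.log gy) / Real.log 2 from by ring]
    rw [div_lt_div_iff_of_pos_right hlog2]
    exact lt_of_le_of_lt hlogconc hloglt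
  -- helper for membership: points of the region lie under the graph of f
  have hmemf : ∀ u : ℝ × ℝ, (∃ p ∈ Set.Icc (0:ℝ) P,
      0 ≤ u.1 ∧ u.1 ≤ Real.logb 2 (1 + Γ1 * p) ∧
      0 ≤ u.2 ∧ u.2 ≤ Real.logb 2 (1 + Γ2 * (P - p))) →
      u.1 ∈ Set.Icc (0:ℝ) R ∧ 0 ≤ u.2 ∧ u.2 ≤ f u.1 := by
    rintro u ⟨p, hp, hu1, hu2, hu3, hu4⟩
    have hposp : (0:ℝ) < 1 + Γ1 * p := by nlinarith [hp.1]
    have hR1 : u.1 ≤ R := by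
      refine hu2.trans ?_
      exact Real.logb_le_logb_of_le hb2 hposp (by nlinarith [hp.2])
    refine ⟨⟨hu1, hR1⟩, hu3, ?_⟩
    -- u.2 ≤ f u.1
    have h2u : (2:ℝ)^u.1 ≤ 1 + Γ1 * p := (Real.le_logb_iff_rpow_le hb2 hposp).mp hu2
    have hdiv : ((2:ℝ)^u.1 - 1) / Γ1 ≤ p := by
      rw [div_le_iff₀ h1]; nlinarith
    have hposPp : (0:ℝ) < 1 + Γ2 * (P - p) := by nlinarith [hp.2]
    refine hu4.trans ?_
    show Real.logb 2 (1 + Γ2 * (P - p)) ≤ Real.logb 2 (1 + Γ2 * (P - ((2:ℝ)^u.1 - 1)/Γ1))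
    apply Real.logb_le_logb_of_le hb2 hposPp
    nlinarith [mul_le_mul_of_nonneg_left hdiv h2.le]
  refine ⟨hanti, hconc, ?_⟩
  -- convexity of the region
  intro u hu v hv a b ha hbn hab
  obtain ⟨huR, hu0, huf⟩ := hmemf u hu
  obtain ⟨hvR, hv0, hvf⟩ := hmemf v hv
  set z : ℝ := a * u.1 + b * v.1 with hz
  have hzmem : z ∈ Set.Icc (0:ℝ) R := by
    constructor
    · exact add_nonneg (mul_nonneg ha huR.1) (mul_nonneg hbn hvR.1)
    · have hRR : a * R + b * R = R := by rw [← add_mul, hab, one_mul]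
      nlinarith [mul_le_mul_of_nonneg_left huR.2 ha, mul_le_mul_of_nonneg_left hvR.2 hbn]
  have h2z1 : (1:ℝ) ≤ (2:ℝ)^z := h1le z hzmem
  have h2zP : (2:ℝ)^z ≤ 1 + Γ1 * P := by
    rw [← h2R]; exact (Real.rpow_le_rpow_left_iff hb2).mpr hzmem.2
  refine ⟨((2:ℝ)^z - 1) / Γ1, ⟨div_nonneg (by linarith) h1.le, ?_⟩, ?_, ?_, ?_, ?_⟩
  · rw [div_le_iff₀ h1]; nlinarith
  · show (0:ℝ) ≤ (a • u + b • v).1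
    simp only [Prod.fst_add, Prod.smul_fst, smul_eq_mul]
    exact add_nonneg (mul_nonneg ha huR.1) (mul_nonneg hbn hvR.1)
  · show (a • u + b • v).1 ≤ Real.logb 2 (1 + Γ1 * (((2:ℝ)^z - 1) / Γ1))
    have harg : 1 + Γ1 * (((2:ℝ)^z - 1) / Γ1) = (2:ℝ)^z := by field_simp; ring
    rw [harg, Real.logb_rpow htwo hne1]
    simp only [Prod.fst_add, Prod.smul_fst, smul_eq_mul]
    exact le_of_eq rfl
  · show (0:ℝ) ≤ (a • u + b • v).2
    simp only [Prod.snd_add, Prod.smul_snd, smul_eq_mul]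
    exact add_nonneg (mul_nonneg ha hu0) (mul_nonneg hbn hv0)
  · show (a • u + b • v).2 ≤ Real.logb 2 (1 + Γ2 * (P - ((2:ℝ)^z - 1) / Γ1))
    have hfz : Real.logb 2 (1 + Γ2 * (P - ((2:ℝ)^z - 1) / Γ1)) = f z := rfl
    rw [hfz]
    have hcc := hconc.concaveOn.2 huR hvR ha hbn hab
    simp only [smul_eq_mul] at hcc
    simp only [Prod.snd_add, Prod.smul_snd, smul_eq_mul]
    calc a * u.2 + b * v.2 ≤ a * f u.1 + b * f v.1 := by
          have := mul_le_mul_of_nonneg_left huf ha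
          have := mul_le_mul_of_nonneg_left hvf hbn
          linarith
      _ ≤ f z := hcc
end

section
/- Let Γ_1, Γ_2, P > 0 and define g: [0, log2(1+Γ_1 P)] → ℝ implicitly by g(R_1) = log2(1 + Γ_2(P − (2^{R_1} − 1)/Γ_1)). Then the second derivative of g is strictly negative on the interior of its domain. -/
theorem stmt_8 (Γ1 Γ2 P : ℝ) (h1 : 0 < Γ1) (h2 : 0 < Γ2) (hP : 0 < P) :
    ∀ x ∈ Set.Ioo (0:ℝ) (Real.logb 2 (1 + Γ1 * P)),
      deriv (deriv (fun r : ℝ =>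
        Real.logb 2 (1 + Γ2 * (P - ((2:ℝ) ^ r - 1) / Γ1)))) x < 0 := by
  intro x hx
  set u : ℝ → ℝ := fun r => 1 + Γ2 * (P - ((2:ℝ) ^ r - 1) / Γ1) with hu
  -- derivative of u
  have hDu : ∀ r : ℝ, HasDerivAt u (-(Γ2 / Γ1) * ((2:ℝ) ^ r * Real.log 2)) r := by
    intro r
    have h2r : HasDerivAt (fun r : ℝ => (2:ℝ) ^ r) ((2:ℝ) ^ r * Real.log 2) r :=
      (Real.hasStrictDerivAt_const_rpow (by norm_num) r).hasDerivAt
    have := (((h2r.sub_const 1).div_const Γ1).const_sub P).const_mul Γ2 |>.const_add 1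
    convert this using 1
    · rfl
    · rfl
    · field_simp
  -- positivity of u on S
  have hS : ∀ y ∈ Set.Ioo (0:ℝ) (Real.logb 2 (1 + Γ1 * P)), 0 < u y := by
    intro y hy
    have h1P : (1:ℝ) < 1 + Γ1 * P := by nlinarith
    have h2y : (2:ℝ) ^ y < 1 + Γ1 * P := by
      calc (2:ℝ) ^ y < (2:ℝ) ^ (Real.logb 2 (1 + Γ1 * P)) :=
            Real.rpow_lt_rpow_left_iff (by norm_num) |>.mpr hy.2
        _ = 1 + Γ1 * P := Real.rpow_logb (by positivity) (by norm_num) (by positivity)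
    have : ((2:ℝ) ^ y - 1) / Γ1 < P := by
      rw [div_lt_iff₀ h1]; nlinarith
    simp only [hu]
    nlinarith
  have hux : 0 < u x := hS x hx
  -- open set where u > 0
  have hucont : Continuous u := by
    have : Continuous fun r : ℝ => (2:ℝ) ^ r :=
      Continuous.rpow continuous_const continuous_id (fun x => Or.inl (by norm_num))
    fun_prop
  have hopen : IsOpen {r : ℝ | 0 < u r} := isOpen_lt continuous_const hucont
  have hmem : {r : ℝ | 0 < u r} ∈ nhds x := hopen.mem_nhds hux
  -- first derivative
  set g1 : ℝ → ℝ := fun r => -(Γ2 / Γ1) * (2:ℝ) ^ r / u r with hg1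
  have hDf : ∀ r, 0 < u r →
      HasDerivAt (fun r : ℝ => Real.logb 2 (1 + Γ2 * (P - ((2:ℝ) ^ r - 1) / Γ1))) (g1 r) r := by
    intro r hr
    have hlog : HasDerivAt Real.log (u r)⁻¹ (u r) := Real.hasDerivAt_log (ne_of_gt hr)
    have := (hlog.comp r (hDu r)).div_const (Real.log 2)
    have heq : (fun r => Real.logb 2 (1 + Γ2 * (P - ((2:ℝ) ^ r - 1) / Γ1)))
        = fun r => Real.log (u r) / Real.log 2 := by
      funext y; rw [Real.logb]
    rw [heq]
    convert this using 1
    have hl2 : Real.log 2 ≠ 0 := ne_of_gt (Real.log_pos (by norm_num))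
    · rfl
    · rfl
    · rfl
    · simp only [hg1]
      field_simp
  have hderiv_eq : deriv (fun r : ℝ => Real.logb 2 (1 + Γ2 * (P - ((2:ℝ) ^ r - 1) / Γ1)))
      =ᶠ[nhds x] g1 := by
    filter_upwards [hmem] with y hy
    exact (hDf y hy).deriv
  rw [Filter.EventuallyEq.deriv_eq hderiv_eq]
  -- second derivative via g1
  have hDg1 : HasDerivAt g1
      ((-(Γ2 / Γ1) * ((2:ℝ) ^ x * Real.log 2) * u x -
        -(Γ2 / Γ1) * (2:ℝ) ^ x * (-(Γ2 / Γ1) * ((2:ℝ) ^ x * Real.log 2))) / (u x) ^ 2) x := by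
    have h2r : HasDerivAt (fun r : ℝ => (2:ℝ) ^ r) ((2:ℝ) ^ x * Real.log 2) x :=
      (Real.hasStrictDerivAt_const_rpow (by norm_num) x).hasDerivAt
    exact (h2r.const_mul (-(Γ2 / Γ1))).div (hDu x) (ne_of_gt hux)
  rw [hDg1.deriv]
  have h2x : (0:ℝ) < (2:ℝ) ^ x := Real.rpow_pos_of_pos (by norm_num) x
  have hl2 : (0:ℝ) < Real.log 2 := Real.log_pos (by norm_num)
  have : (-(Γ2 / Γ1) * ((2:ℝ) ^ x * Real.log 2) * u x -
        -(Γ2 / Γ1) * (2:ℝ) ^ x * (-(Γ2 / Γ1) * ((2:ℝ) ^ x * Real.log 2)))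
      = -(Γ2 / Γ1) * (2:ℝ) ^ x * Real.log 2 * (u x + (Γ2 / Γ1) * (2:ℝ) ^ x) := by ring
  rw [this]
  have hpos : 0 < Γ2 / Γ1 := div_pos h2 h1
  have hnum : -(Γ2 / Γ1) * (2:ℝ) ^ x * Real.log 2 * (u x + (Γ2 / Γ1) * (2:ℝ) ^ x) < 0 := by
    have : 0 < u x + (Γ2 / Γ1) * (2:ℝ) ^ x := by positivity
    nlinarith [mul_pos (mul_pos (mul_pos hpos h2x) hl2) this]
  exact div_neg_of_neg_of_pos hnum (by positivity)
end

section
/- Suppose for every feasible IRS phase-shift matrix Θ the correlation ρ(Θ) = |h_1(Θ)^H h_2(Θ)|/(||h_1(Θ)||·||h_2(Θ)||) > 0, and the feasible set of Θ is finite. Then there exists ρ_min > 0 such that for every static configuration the ZF rate of user 2 when r_1 > 0 satisfies r_2 ≤ log2(1 + P·G_2·(1−ρ_min^2)/σ^2) < log2(1 + P·G_2/σ^2), where G_2 = max_Θ ||h_2(Θ)||^2; hence time sharing with the single-user point (0, log2(1+P·G_2/σ^2)) yields a rate pair strictly dominating some static Pareto point. -/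
open scoped ComplexOrder in
lemma proj_bound {E : Type*} [NormedAddCommGroup E] [InnerProductSpace ℂ E]
    (x y w : E) (hx : x ≠ 0) (hw : (inner ℂ x w : ℂ) = 0) :
    ‖(inner ℂ y w : ℂ)‖ ^ 2 ≤ (‖y‖ ^ 2 - ‖(inner ℂ x y : ℂ)‖ ^ 2 / ‖x‖ ^ 2) * ‖w‖ ^ 2 := by
  have hx2 : (0:ℝ) < ‖x‖ ^ 2 := pow_pos (norm_pos_iff.mpr hx) 2
  set a : ℂ := inner ℂ x y with ha
  set c : ℂ := a / ((‖x‖ ^ 2 : ℝ) : ℂ) with hc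
  set v : E := y - c • x with hv
  have hvw : (inner ℂ v w : ℂ) = inner ℂ y w := by
    rw [hv, inner_sub_left, inner_smul_left, hw]
    ring
  have hvn : ‖v‖ ^ 2 = ‖y‖ ^ 2 - ‖a‖ ^ 2 / ‖x‖ ^ 2 := by
    have h1 : ‖v‖ ^ 2 = ‖y‖ ^ 2 - 2 * Complex.re (inner ℂ y (c • x) : ℂ) + ‖c • x‖ ^ 2 := by
      simpa using norm_sub_sq (𝕜 := ℂ) y (c • x)
    have hyx : (inner ℂ y x : ℂ) = starRingEnd ℂ a := by
      rw [ha, inner_conj_symm]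
    have hre : (inner ℂ y (c • x) : ℂ) = ((‖a‖ ^ 2 / ‖x‖ ^ 2 : ℝ) : ℂ) := by
      rw [inner_smul_right, hyx, hc, div_mul_eq_mul_div, Complex.mul_conj]
      rw [Complex.normSq_eq_norm_sq]
      push_cast
      ring
    have hcs : ‖c • x‖ ^ 2 = ‖a‖ ^ 2 / ‖x‖ ^ 2 := by
      rw [norm_smul, mul_pow, hc]
      rw [norm_div]
      simp only [Complex.norm_real, Real.norm_eq_abs, abs_of_pos hx2]
      field_simp
    rw [h1, hre, hcs, Complex.ofReal_re]
    ring
  have hCS : ‖(inner ℂ v w : ℂ)‖ ≤ ‖v‖ * ‖w‖ := norm_inner_le_norm v w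
  calc ‖(inner ℂ y w : ℂ)‖ ^ 2 = ‖(inner ℂ v w : ℂ)‖ ^ 2 := by rw [hvw]
    _ ≤ (‖v‖ * ‖w‖) ^ 2 := by
        apply pow_le_pow_left₀ (norm_nonneg _) hCS _
    _ = ‖v‖ ^ 2 * ‖w‖ ^ 2 := by ring
    _ = (‖y‖ ^ 2 - ‖a‖ ^ 2 / ‖x‖ ^ 2) * ‖w‖ ^ 2 := by rw [hvn]

theorem stmt_19 (M : ℕ) {ι : Type*} [Fintype ι] [Nonempty ι]
    (h1 h2 : ι → EuclideanSpace ℂ (Fin M))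
    (hne1 : ∀ θ, h1 θ ≠ 0) (hne2 : ∀ θ, h2 θ ≠ 0)
    (hρ : ∀ θ, 0 < ‖(inner ℂ (h1 θ) (h2 θ) : ℂ)‖ / (‖h1 θ‖ * ‖h2 θ‖))
    (P σ2 : ℝ) (hP : 0 < P) (hσ : 0 < σ2) :
    ∃ ρmin > 0,
      (∀ θ, ρmin ≤ ‖(inner ℂ (h1 θ) (h2 θ) : ℂ)‖ / (‖h1 θ‖ * ‖h2 θ‖)) ∧
      ∀ θ (w1 w2 : EuclideanSpace ℂ (Fin M)),
        (inner ℂ (h1 θ) w2 : ℂ) = 0 → (inner ℂ (h2 θ) w1 : ℂ) = 0 →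
        ‖w1‖ ^ 2 + ‖w2‖ ^ 2 ≤ P → 0 < ‖(inner ℂ (h1 θ) w1 : ℂ)‖ →
        Real.logb 2 (1 + ‖(inner ℂ (h2 θ) w2 : ℂ)‖ ^ 2 / σ2)
            ≤ Real.logb 2 (1 + P * (⨆ θ', ‖h2 θ'‖ ^ 2) * (1 - ρmin ^ 2) / σ2) ∧
        Real.logb 2 (1 + P * (⨆ θ', ‖h2 θ'‖ ^ 2) * (1 - ρmin ^ 2) / σ2)
            < Real.logb 2 (1 + P * (⨆ θ', ‖h2 θ'‖ ^ 2) / σ2) := by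
  set f : ι → ℝ := fun θ => ‖(inner ℂ (h1 θ) (h2 θ) : ℂ)‖ / (‖h1 θ‖ * ‖h2 θ‖) with hf
  obtain ⟨θ0, -, hθ0⟩ := Finset.exists_min_image Finset.univ f
    ⟨Classical.arbitrary ι, Finset.mem_univ _⟩
  have hmin : ∀ θ, f θ0 ≤ f θ := fun θ => hθ0 θ (Finset.mem_univ θ)
  have hρle1 : ∀ θ, f θ ≤ 1 := by
    intro θ
    have hd : 0 < ‖h1 θ‖ * ‖h2 θ‖ :=
      mul_pos (norm_pos_iff.mpr (hne1 θ)) (norm_pos_iff.mpr (hne2 θ))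
    rw [hf, div_le_one hd]
    exact norm_inner_le_norm _ _
  have hpos : 0 < f θ0 := hρ θ0
  have h01 : f θ0 ≤ 1 := hρle1 θ0
  set G2 : ℝ := ⨆ θ', ‖h2 θ'‖ ^ 2 with hG2
  have hbdd : BddAbove (Set.range fun θ' => ‖h2 θ'‖ ^ 2) := Set.Finite.bddAbove (Set.finite_range _)
  have hle : ∀ θ, ‖h2 θ‖ ^ 2 ≤ G2 := fun θ => le_ciSup hbdd θ
  have hG2pos : 0 < G2 := lt_of_lt_of_le (pow_pos (norm_pos_iff.mpr (hne2 θ0)) 2) (hle θ0)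
  have h1m : 0 ≤ 1 - f θ0 ^ 2 := by nlinarith
  refine ⟨f θ0, hpos, hmin, ?_⟩
  intro θ w1 w2 hw2 hw1 hpow hw1pos
  have hn1 : (0:ℝ) < ‖h1 θ‖ := norm_pos_iff.mpr (hne1 θ)
  have hn2 : (0:ℝ) < ‖h2 θ‖ := norm_pos_iff.mpr (hne2 θ)
  have hw2P : ‖w2‖ ^ 2 ≤ P := by nlinarith [sq_nonneg ‖w1‖]
  have hkey : ‖(inner ℂ (h2 θ) w2 : ℂ)‖ ^ 2 ≤ P * G2 * (1 - f θ0 ^ 2) := by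
    have hb := proj_bound (h1 θ) (h2 θ) w2 (hne1 θ) hw2
    have hρθ : f θ = ‖(inner ℂ (h1 θ) (h2 θ) : ℂ)‖ / (‖h1 θ‖ * ‖h2 θ‖) := rfl
    have hfact : ‖h2 θ‖ ^ 2 - ‖(inner ℂ (h1 θ) (h2 θ) : ℂ)‖ ^ 2 / ‖h1 θ‖ ^ 2
        = ‖h2 θ‖ ^ 2 * (1 - f θ ^ 2) := by
      rw [hρθ]
      field_simp
    have hθle : f θ0 ≤ f θ := hmin θ
    have hθ0n : 0 ≤ f θ0 := le_of_lt hpos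
    have h2a : ‖h2 θ‖ ^ 2 * (1 - f θ ^ 2) ≤ G2 * (1 - f θ0 ^ 2) := by
      have : 1 - f θ ^ 2 ≤ 1 - f θ0 ^ 2 := by nlinarith
      nlinarith [hle θ, sq_nonneg ‖h2 θ‖, hG2pos]
    have hwn : (0:ℝ) ≤ ‖w2‖ ^ 2 := sq_nonneg _
    calc ‖(inner ℂ (h2 θ) w2 : ℂ)‖ ^ 2
        ≤ (‖h2 θ‖ ^ 2 - ‖(inner ℂ (h1 θ) (h2 θ) : ℂ)‖ ^ 2 / ‖h1 θ‖ ^ 2) * ‖w2‖ ^ 2 := hb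
      _ = ‖h2 θ‖ ^ 2 * (1 - f θ ^ 2) * ‖w2‖ ^ 2 := by rw [hfact]
      _ ≤ G2 * (1 - f θ0 ^ 2) * P := by
          apply mul_le_mul h2a hw2P hwn
          positivity
      _ = P * G2 * (1 - f θ0 ^ 2) := by ring
  constructor
  · have hA : (0:ℝ) ≤ ‖(inner ℂ (h2 θ) w2 : ℂ)‖ ^ 2 / σ2 := by positivity
    apply Real.logb_le_logb_of_le one_lt_two (by linarith)
    have : ‖(inner ℂ (h2 θ) w2 : ℂ)‖ ^ 2 / σ2 ≤ P * G2 * (1 - f θ0 ^ 2) / σ2 := by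
      gcongr
    linarith
  · apply Real.logb_lt_logb one_lt_two
    · have : 0 ≤ P * G2 * (1 - f θ0 ^ 2) / σ2 := by positivity
      linarith
    · have hq : 0 < P * G2 * f θ0 ^ 2 := mul_pos (mul_pos hP hG2pos) (pow_pos hpos 2)
      have : P * G2 * (1 - f θ0 ^ 2) < P * G2 := by nlinarith
      have := div_lt_div_of_pos_right this hσ
      linarith
end
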